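/- There is no perfect polynomial over 𝔽₂ of the form S = P₁² ⋯ P_m² where each P_j is a distinct Mersenne prime over 𝔽₂. -/

import Mathlib

open Polynomial

/-- Sum of all monic divisors of a polynomial over 𝔽₂. -/
noncomputable def polySigma (A : Polynomial (ZMod 2)) : Polynomial (ZMod 2) :=
  ∑ᶠ d ∈ {d : Polynomial (ZMod 2) | d.Monic ∧ d ∣ A}, d

local notation "R" => Polynomial (ZMod 2)
local notation "F" => GaloisField 2 2


lemma monic_of_ne_zero {p : R} (hp : p ≠ 0) : p.Monic := by
  have h := mt leadingCoeff_eq_zero.mp hp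
  have : ∀ z : ZMod 2, z ≠ 0 → z = 1 := by decide
  exact this _ h

lemma eq_one_of_isUnit {p : R} (hp : IsUnit p) : p = 1 := by
  obtain ⟨r, hr, hC⟩ := Polynomial.isUnit_iff.mp hp
  have h1 : ∀ z : ZMod 2, IsUnit z → z = 1 := by decide
  simp [← hC, h1 r hr]

lemma eq_of_associated {a b : R} (h : Associated a b) : a = b := by
  obtain ⟨u, hu⟩ := h
  have : (u : R) = 1 := eq_one_of_isUnit u.isUnit
  simpa [this] using hu

lemma exists_rep {ι : Type*} [DecidableEq ι] (s : Finset ι) (P : ι → R)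
    (hP : ∀ i ∈ s, Prime (P i)) (d : R) (hd : d ∣ ∏ i ∈ s, P i ^ 2) :
    ∃ e : ι → ℕ, (∀ i, e i ≤ 2) ∧ d = ∏ i ∈ s, P i ^ e i := by
  induction s using Finset.induction_on generalizing d with
  | empty =>
    refine ⟨fun _ => 0, fun _ => Nat.zero_le _, ?_⟩
    simpa using eq_one_of_isUnit (isUnit_of_dvd_one (by simpa using hd))
  | @insert a s ha ih =>
    rw [Finset.prod_insert ha] at hd
    obtain ⟨d₁, d₂, h1, h2, rfl⟩ := exists_dvd_and_dvd_of_dvd_mul hd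
    obtain ⟨k, hk, hassoc⟩ := (dvd_prime_pow (hP a (Finset.mem_insert_self a s)) 2).mp h1
    obtain ⟨e, he, rfl⟩ := ih (fun i hi => hP i (Finset.mem_insert_of_mem hi)) d₂ h2
    refine ⟨fun i => if i = a then k else e i, fun i => by dsimp only; split <;> [exact hk; exact he i], ?_⟩
    rw [Finset.prod_insert ha]
    dsimp only
    rw [if_pos rfl, eq_of_associated hassoc]
    congr 1
    exact Finset.prod_congr rfl fun i hi => by rw [if_neg (fun h : i = a => ha (h ▸ hi))]

lemma pow_dvd_le {m : ℕ} (P : Fin m → R) (hP : ∀ i, Prime (P i))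
    (hinj : Function.Injective P) (e : Fin m → ℕ) (i : Fin m) (k : ℕ)
    (hd : P i ^ k ∣ ∏ j, P j ^ e j) : k ≤ e i := by
  have hnd : ¬ P i ∣ ∏ j ∈ Finset.univ.erase i, P j ^ e j := by
    intro h
    obtain ⟨j, hj, hdj⟩ := (Prime.dvd_finset_prod_iff (hP i) _).mp h
    have : P i ∣ P j := (hP i).dvd_of_dvd_pow hdj
    have : P i = P j := eq_of_associated
      (((hP i).irreducible).associated_of_dvd ((hP j).irreducible) this)
    exact (Finset.mem_erase.mp hj).1 (hinj this).symm
  rw [← Finset.mul_prod_erase Finset.univ _ (Finset.mem_univ i)] at hd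
  have := (hP i).pow_dvd_of_dvd_mul_right k hnd hd
  exact (pow_dvd_pow_iff (hP i).ne_zero fun h => (hP i).not_unit h).mp this

lemma sigma_eq {m : ℕ} (P : Fin m → R) (hP : ∀ i, Prime (P i))
    (hinj : Function.Injective P) :
    polySigma (∏ j, P j ^ 2) = ∏ j, (1 + P j + P j ^ 2) := by
  set g : (Fin m → Fin 3) → R := fun e => ∏ j, P j ^ (e j : ℕ) with hg
  have hginj : Function.Injective g := by
    intro e f h
    funext i
    have key : ∀ (e f : Fin m → Fin 3), g e = g f → (e i : ℕ) ≤ (f i : ℕ) := by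
      intro e f h
      refine pow_dvd_le P hP hinj (fun j => (f j : ℕ)) i _ ?_
      have hd : P i ^ (e i : ℕ) ∣ g e := Finset.dvd_prod_of_mem _ (Finset.mem_univ i)
      rw [h] at hd
      simpa [hg] using hd
    exact Fin.le_antisymm (key e f h) (key f e h.symm)
  have hset : {d : R | d.Monic ∧ d ∣ ∏ j, P j ^ 2} = Set.range g := by
    ext d
    constructor
    · rintro ⟨hmon, hdvd⟩
      obtain ⟨e, he, rfl⟩ := exists_rep Finset.univ P (fun i _ => hP i) d hdvd
      exact ⟨fun j => ⟨e j, by have := he j; omega⟩, rfl⟩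
    · rintro ⟨e, rfl⟩
      refine ⟨monic_of_ne_zero ?_, Finset.prod_dvd_prod_of_dvd _ _
        (fun j _ => pow_dvd_pow (P j) (by have := (e j).is_le; omega))⟩
      exact Finset.prod_ne_zero_iff.mpr fun j _ => pow_ne_zero _ (hP j).ne_zero
  rw [polySigma, hset, finsum_mem_range hginj, finsum_eq_sum_of_fintype]
  have := (Finset.prod_univ_sum (fun _ : Fin m => (Finset.univ : Finset (Fin 3)))
    (fun j i => P j ^ (i : ℕ))).symm
  rw [Fintype.piFinset_univ] at this
  rw [hg, this]
  refine Finset.prod_congr rfl fun j _ => ?_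
  rw [Fin.sum_univ_three]
  norm_num


lemma h2R : (2 : R) = 0 := by
  have : (2 : R) = C (2 : ZMod 2) := by norm_cast
  rw [this, show (2 : ZMod 2) = 0 from rfl, map_zero]

lemma X1_ne : (X + 1 : R) ≠ 0 := fun h => by
  simpa using congrArg (eval 0) h

lemma mersenne_natDegree (a b : ℕ) (ha : 0 < a) (hb : 0 < b) :
    ((1 : R) + X ^ a * (X + 1) ^ b).natDegree = a + b := by
  have hX1 : (X + 1 : R).natDegree = 1 := by
    rw [show (X + 1 : R) = X + C 1 by rw [C_1], natDegree_X_add_C]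
  have hq : ((X : R) ^ a * (X + 1) ^ b).natDegree = a + b := by
    rw [natDegree_mul (pow_ne_zero _ X_ne_zero) (pow_ne_zero _ X1_ne),
      natDegree_pow, natDegree_pow, natDegree_X, hX1, mul_one, mul_one]
  rw [add_comm, show ((X : R) ^ a * (X + 1) ^ b + 1) = X ^ a * (X+1) ^ b + C 1 by rw [C_1],
    natDegree_add_C, hq]

lemma natDegree_T : ((X^2 + X + 1 : R)).natDegree = 2 := by compute_degree!
lemma natDegree_U : ((X^4 + X + 1 : R)).natDegree = 4 := by compute_degree!



lemma U_ne_zero : (X^4 + X + 1 : R) ≠ 0 := fun h => by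
  simpa using congrArg (eval 0) h

lemma U_noroot : ∀ c : ZMod 2, ¬ (X^4 + X + 1 : R).IsRoot c := by
  intro c h
  simp only [IsRoot, eval_add, eval_pow, eval_X, eval_one] at h
  fin_cases c <;> revert h <;> decide

lemma T_nmid_U : ¬ (X^2 + X + 1 : R) ∣ (X^4 + X + 1) := by
  intro hdvd
  have hid : (X^4 + X + 1 : R) - (X^2+X+1) * (X^2+X) = 1 := by
    linear_combination (-(X:R)^3 - X^2) * h2R
  have h1 : (X^2 + X + 1 : R) ∣ 1 := by
    have h' : (X^2 + X + 1 : R) ∣ (X^4 + X + 1) - (X^2+X+1) * (X^2+X) :=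
      hdvd.sub (dvd_mul_right _ _)
    rwa [hid] at h'
  exact not_isUnit_of_natDegree_pos _ (by rw [natDegree_T]; norm_num)
    (isUnit_of_dvd_one h1)

lemma root_of_dvd {p q : R} (h : p ∣ q) {c : ZMod 2} (hc : p.IsRoot c) : q.IsRoot c := by
  obtain ⟨r, rfl⟩ := h
  simp [IsRoot, hc.eq_zero]

lemma U_irred : Irreducible (X^4 + X + 1 : R) := by
  constructor
  · exact not_isUnit_of_natDegree_pos _ (by rw [natDegree_U]; norm_num)
  intro f g hfg
  by_contra hcon
  push_neg at hcon
  obtain ⟨hf, hg⟩ := hcon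
  have hf0 : f ≠ 0 := fun h => U_ne_zero (by rw [hfg, h, zero_mul])
  have hg0 : g ≠ 0 := fun h => U_ne_zero (by rw [hfg, h, mul_zero])
  have hdeg : f.natDegree + g.natDegree = 4 := by
    rw [← natDegree_mul hf0 hg0, ← hfg, natDegree_U]
  have hfpos : 1 ≤ f.natDegree := by
    rcases Nat.eq_zero_or_pos f.natDegree with h | h
    · exact absurd (((monic_of_ne_zero hf0).natDegree_eq_zero.mp h) ▸ isUnit_one) hf
    · exact h
  have hgpos : 1 ≤ g.natDegree := by
    rcases Nat.eq_zero_or_pos g.natDegree with h | h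
    · exact absurd (((monic_of_ne_zero hg0).natDegree_eq_zero.mp h) ▸ isUnit_one) hg
    · exact h
  obtain ⟨p, hpdvd, hp1, hp2⟩ : ∃ p : R, p ∣ (X^4 + X + 1 : R) ∧ 1 ≤ p.natDegree ∧ p.natDegree ≤ 2 := by
    rcases le_or_gt f.natDegree 2 with h | h
    · exact ⟨f, ⟨g, hfg⟩, hfpos, h⟩
    · exact ⟨g, ⟨f, by rw [hfg]; ring⟩, hgpos, by omega⟩
  have hp0 : p ≠ 0 := fun h => by simp [h] at hp1
  have hpm : p.Monic := monic_of_ne_zero hp0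
  rcases (by omega : p.natDegree = 1 ∨ p.natDegree = 2) with h1 | h2
  · -- degree 1 : has a root
    have hform := hpm.eq_X_add_C h1
    have hroot : p.IsRoot (p.coeff 0) := by
      rw [IsRoot, hform]
      simp [CharTwo.add_self_eq_zero]
    exact U_noroot _ (root_of_dvd hpdvd hroot)
  · by_cases hr : ∃ c : ZMod 2, p.IsRoot c
    · obtain ⟨c, hc⟩ := hr
      exact U_noroot _ (root_of_dvd hpdvd hc)
    · push_neg at hr
      have hzm : ∀ z : ZMod 2, z ≠ 0 → z = 1 := by decide
      have h0 : p.eval 0 = 1 := hzm _ (hr 0)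
      have h1' : p.eval 1 = 1 := hzm _ (hr 1)
      have hTm : (X^2 + X + 1 : R).Monic :=
        monic_of_ne_zero (fun h => by simpa using congrArg (eval 0) h)
      have hpT : p = X^2 + X + 1 := by
        by_cases hd0 : p - (X^2 + X + 1) = 0
        · rwa [sub_eq_zero] at hd0
        · exfalso
          have hdegp : p.degree = (2 : ℕ) := by
            rw [degree_eq_natDegree hp0, h2]
          have hdegT : (X^2 + X + 1 : R).degree = (2 : ℕ) := by
            rw [degree_eq_natDegree hTm.ne_zero, natDegree_T]
          have hlt := degree_sub_lt (p := p) (q := (X^2 + X + 1 : R))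
            (by rw [hdegp, hdegT]) hp0 (by rw [hpm.leadingCoeff, hTm.leadingCoeff])
          rw [hdegp] at hlt
          have hnd : (p - (X^2 + X + 1)).natDegree ≤ 1 := by
            have := (natDegree_lt_iff_degree_lt hd0).mpr hlt
            omega
          have hab := eq_X_add_C_of_natDegree_le_one hnd
          have e0 : (p - (X^2 + X + 1)).eval 0 = 0 := by
            rw [eval_sub, h0]
            simp
          have e1 : (p - (X^2 + X + 1)).eval 1 = 0 := by
            rw [eval_sub, h1']
            simp only [eval_add, eval_pow, eval_X, eval_one]
            decide
          rw [hab] at e0 e1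
          simp only [eval_add, eval_mul, eval_C, eval_X, mul_zero, zero_add, mul_one] at e0 e1
          rw [e0, add_zero] at e1
          apply hd0
          rw [hab, e0, e1]
          simp
      exact T_nmid_U (hpT ▸ hpdvd)


lemma exists_omega : ∃ ω : F, ω ≠ 0 ∧ ω ≠ 1 ∧ ω ^ 4 = ω := by
  letI : Fintype F := Fintype.ofFinite F
  letI : DecidableEq F := Classical.decEq F
  have hcard : Fintype.card (GaloisField 2 2) = 4 := by
    have := GaloisField.card 2 2 (by norm_num)
    rw [Nat.card_eq_fintype_card] at this
    omega
  have : ∃ ω : F, ω ∉ ({0, 1} : Finset F) := by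
    by_contra h
    push_neg at h
    have hsub : (Finset.univ : Finset F) ⊆ {0, 1} := fun x _ => h x
    have h1 := Finset.card_le_card hsub
    have h2 : ({0, 1} : Finset F).card ≤ 2 :=
      (Finset.card_insert_le 0 {1}).trans (by simp)
    rw [Finset.card_univ, hcard] at h1
    omega
  obtain ⟨ω, hω⟩ := this
  simp only [Finset.mem_insert, Finset.mem_singleton, not_or] at hω
  refine ⟨ω, hω.1, hω.2, ?_⟩
  have := FiniteField.pow_card ω
  rwa [hcard] at this

theorem no_special_perfect_mersenne :
    ¬ ∃ (m : ℕ) (P : Fin m → Polynomial (ZMod 2)), 0 < m ∧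
      (∀ j, Irreducible (P j) ∧
        ∃ a b : ℕ, 0 < a ∧ 0 < b ∧ P j = 1 + X ^ a * (X + 1) ^ b) ∧
      Function.Injective P ∧
      polySigma (∏ j, (P j) ^ 2) = ∏ j, (P j) ^ 2 := by
  rintro ⟨m, P, hm, hP, hinj, hperf⟩
  have hprime : ∀ j, Prime (P j) := fun j => (hP j).1.prime
  have hmon : ∀ j, (P j).Monic := fun j => monic_of_ne_zero (hP j).1.ne_zero
  rw [sigma_eq P hprime hinj] at hperf
  -- set up 𝔽₄
  obtain ⟨ω, hω0, hω1, hpow⟩ := exists_omega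
  have h2 : (2 : F) = 0 := by exact_mod_cast CharP.cast_eq_zero F 2
  have hcube : ω ^ 3 = 1 := by
    apply mul_left_cancel₀ hω0
    rw [mul_one, show ω * ω ^ 3 = ω ^ 4 by ring, hpow]
  have hT : ω ^ 2 + ω + 1 = 0 := by
    have hz : (ω - 1) * (ω ^ 2 + ω + 1) = 0 := by linear_combination hcube
    rcases mul_eq_zero.mp hz with h | h
    · exact absurd (by linear_combination h) hω1
    · exact h
  have hω1' : ω + 1 ≠ 0 := fun h => hω1 (by linear_combination h - h2)
  have hsq : ω + 1 = ω ^ 2 := by linear_combination -hT + (ω + 1) * h2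
  have hcube1 : (ω + 1) ^ 3 = 1 := by
    rw [hsq, show ((ω^2)^3 : F) = (ω^3)^2 by ring, hcube, one_pow]
  -- image of each Mersenne prime
  have key : ∀ j, ∃ z : F, z ≠ 0 ∧ aeval ω (P j) = 1 + z ∧ z ^ 3 = 1 := by
    intro j
    obtain ⟨a, b, _, _, hPj⟩ := (hP j).2
    refine ⟨ω ^ a * (ω + 1) ^ b, mul_ne_zero (pow_ne_zero _ hω0) (pow_ne_zero _ hω1'), ?_, ?_⟩
    · rw [hPj]; simp
    · rw [mul_pow, ← pow_mul, ← pow_mul, mul_comm a 3, mul_comm b 3, pow_mul, pow_mul,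
        hcube, hcube1, one_pow, one_pow, mul_one]
  have hzz : ∀ j, aeval ω (P j) ≠ 0 → 1 + aeval ω (P j) + (aeval ω (P j)) ^ 2 = 0 := by
    intro j hne
    obtain ⟨z, hz0, hφ, hz3⟩ := key j
    have hz1 : z ≠ 1 := by
      intro h
      exact hne (by rw [hφ, h]; linear_combination h2)
    have hzeq : z ^ 2 + z + 1 = 0 := by
      have hz' : (z - 1) * (z ^ 2 + z + 1) = 0 := by linear_combination hz3
      rcases mul_eq_zero.mp hz' with h | h
      · exact absurd (by linear_combination h) hz1
      · exact h
    rw [hφ]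
    linear_combination hzeq + (1 + z) * h2
  by_cases hall : ∀ j, aeval ω (P j) ≠ 0
  · have hφeq := congrArg (aeval ω : R →ₐ[ZMod 2] F) hperf
    rw [map_prod, map_prod] at hφeq
    have hL : (∏ j, aeval ω (1 + P j + P j ^ 2)) = 0 := by
      apply Finset.prod_eq_zero (Finset.mem_univ (⟨0, hm⟩ : Fin m))
      rw [map_add, map_add, map_one, map_pow]
      exact hzz _ (hall _)
    have hR : (∏ j, aeval ω (P j ^ 2)) ≠ 0 :=
      Finset.prod_ne_zero_iff.mpr fun j _ => by
        rw [map_pow]; exact pow_ne_zero _ (hall j)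
    exact hR (by rw [← hφeq, hL])
  · push_neg at hall
    obtain ⟨j₀, hj₀⟩ := hall
    -- P j₀ is the minimal polynomial of ω, i.e. X² + X + 1
    have hminp : minpoly (ZMod 2) ω = P j₀ :=
      (minpoly.eq_of_irreducible_of_monic (hP j₀).1 hj₀ (hmon j₀)).symm
    have hTdvd : P j₀ ∣ (X ^ 2 + X + 1 : R) := by
      rw [← hminp]
      exact minpoly.dvd _ _ (by simpa using hT)
    have hdeg2 : 2 ≤ (P j₀).natDegree := by
      obtain ⟨a, b, ha, hb, hPj⟩ := (hP j₀).2
      rw [hPj, mersenne_natDegree a b ha hb]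
      omega
    obtain ⟨h, hh⟩ := hTdvd
    have hh0 : h ≠ 0 := by
      intro hz
      rw [hz, mul_zero] at hh
      simpa using congrArg (eval 0) hh
    have hsum : (P j₀).natDegree + h.natDegree = 2 := by
      rw [← natDegree_mul (hP j₀).1.ne_zero hh0, ← hh, natDegree_T]
    have hh1 : h = 1 :=
      (monic_of_ne_zero hh0).natDegree_eq_zero.mp (by omega)
    have hPT : P j₀ = X ^ 2 + X + 1 := by
      rw [hh, hh1, mul_one]
    have hU : (1 : R) + P j₀ + P j₀ ^ 2 = X ^ 4 + X + 1 := by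
      rw [hPT]
      linear_combination ((X : R) ^ 3 + 2 * X ^ 2 + X + 1) * h2R
    have hUdvdL : (X ^ 4 + X + 1 : R) ∣ ∏ j, (1 + P j + P j ^ 2) := by
      rw [← hU]
      exact Finset.dvd_prod_of_mem _ (Finset.mem_univ j₀)
    rw [hperf] at hUdvdL
    have hUprime : Prime (X ^ 4 + X + 1 : R) := U_irred.prime
    obtain ⟨k, _, hk⟩ := (Prime.dvd_finset_prod_iff hUprime _).mp hUdvdL
    have hUk : (X ^ 4 + X + 1 : R) ∣ P k := hUprime.dvd_of_dvd_pow hk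
    have hPk : P k = X ^ 4 + X + 1 :=
      (eq_of_associated (U_irred.associated_of_dvd (hP k).1 hUk)).symm
    obtain ⟨z, hz0, hφk, _⟩ := key k
    have hUval : aeval ω ((X : R) ^ 4 + X + 1) = 1 := by
      simp only [map_add, map_pow, map_one, aeval_X]
      linear_combination hpow + ω * h2
    rw [hPk, hUval] at hφk
    exact hz0 (by linear_combination -hφk)
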